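/- In the q-exterior algebra Λ_q(V) on generators v_1,…,v_{2n} with relations v_k∧v_k = 0 and q v_i∧v_j + v_j∧v_i = 0 for i<j, the element w₁ = Σ_{k=1}^n a_k v_{2k-1}∧v_{2k} satisfies the q-binomial power formula w₁^{∧r} = [r]_{q⁴}! · Σ_{1≤k₁<⋯<k_r≤n} a_{k₁}⋯a_{k_r} v_{2k₁-1}∧v_{2k₁}∧⋯∧v_{2k_r-1}∧v_{2k_r}, where [r]_{q⁴}! = (q⁴;q⁴)_r/(1-q⁴)^r. -/

import Mathlib

set_option synthInstance.maxHeartbeats 1000000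
set_option maxHeartbeats 1000000

open scoped Classical

noncomputable section

/-- The ground field `K = ℚ(q)`. -/
abbrev K1 : Type := RatFunc ℚ

/-- The indeterminate `q`. -/
noncomputable def q1 : K1 := RatFunc.X

/-- The canonical basis vector `v_k` of `V = K^N`. -/
noncomputable def eV (N : ℕ) (k : Fin N) : Fin N → K1 := Pi.single k 1

/-- The defining relations of the q-exterior algebra:
`v_k ∧ v_k = 0` and `q v_i ∧ v_j + v_j ∧ v_i = 0` for `i < j`. -/
inductive qExtRel (N : ℕ) :
    TensorAlgebra K1 (Fin N → K1) → TensorAlgebra K1 (Fin N → K1) → Prop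
  | sq (k : Fin N) :
      qExtRel N (TensorAlgebra.ι K1 (eV N k) * TensorAlgebra.ι K1 (eV N k)) 0
  | anti (i j : Fin N) (h : i < j) :
      qExtRel N (q1 • (TensorAlgebra.ι K1 (eV N i) * TensorAlgebra.ι K1 (eV N j)) +
        TensorAlgebra.ι K1 (eV N j) * TensorAlgebra.ι K1 (eV N i)) 0

/-- The q-exterior algebra `Λ_q(V)`: quotient of the tensor algebra by the two-sided
ideal generated by the relations. -/
abbrev qExt (N : ℕ) := RingQuot (qExtRel N)

/-- The generator `v_k` of `Λ_q(V)`. -/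
noncomputable def gen (N : ℕ) (k : Fin N) : qExt N :=
  RingQuot.mkAlgHom K1 (qExtRel N) (TensorAlgebra.ι K1 (eV N k))

theorem gen_sq (N : ℕ) (k : Fin N) : gen N k * gen N k = 0 := by
  have := RingQuot.mkAlgHom_rel K1 (qExtRel.sq k)
  simpa [gen, map_mul] using this

theorem gen_anti {N : ℕ} {i j : Fin N} (h : i < j) :
    gen N j * gen N i = -(q1 • (gen N i * gen N j)) := by
  have := RingQuot.mkAlgHom_rel K1 (qExtRel.anti i j h)
  simp only [map_add, map_smul, map_mul, map_zero] at this
  rw [eq_neg_iff_add_eq_zero, add_comm]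
  exact this

theorem gen_anti' {N : ℕ} {i j : Fin N} (h : i < j) :
    gen N j * gen N i = (-q1) • (gen N i * gen N j) := by
  rw [gen_anti h]; exact (neg_smul q1 _).symm

theorem swap_left {N : ℕ} {i j : Fin N} (h : i < j) (z : qExt N) :
    gen N j * (gen N i * z) = (-q1) • (gen N i * (gen N j * z)) := by
  rw [← mul_assoc, gen_anti' h, smul_mul_assoc, mul_assoc]

theorem pair_sq {N : ℕ} {x y : Fin N} (hxy : x < y) :
    gen N x * gen N y * (gen N x * gen N y) = 0 := by
  rw [mul_assoc, swap_left hxy, gen_sq, mul_zero, smul_zero, mul_zero]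

theorem pair_comm {N : ℕ} {x y z w : Fin N} (hxz : x < z) (hxw : x < w)
    (hyz : y < z) (hyw : y < w) :
    gen N z * gen N w * (gen N x * gen N y) =
      (q1 ^ 4) • (gen N x * gen N y * (gen N z * gen N w)) := by
  have h1 : gen N w * (gen N x * gen N y) =
      (q1 * q1) • (gen N x * (gen N y * gen N w)) := by
    rw [swap_left hxw, gen_anti' hyw, mul_smul_comm, smul_smul, neg_mul_neg]
  have h2 : gen N z * (gen N x * (gen N y * gen N w)) =
      (q1 * q1) • (gen N x * (gen N y * (gen N z * gen N w))) := by
    rw [swap_left hxz, swap_left hyz, mul_smul_comm, smul_smul, neg_mul_neg]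
  calc gen N z * gen N w * (gen N x * gen N y)
      = gen N z * (gen N w * (gen N x * gen N y)) := by rw [mul_assoc]
    _ = (q1 * q1) • (gen N z * (gen N x * (gen N y * gen N w))) := by
        rw [h1, mul_smul_comm]
    _ = (q1 * q1) • ((q1 * q1) • (gen N x * (gen N y * (gen N z * gen N w)))) := by rw [h2]
    _ = (q1 ^ 4) • (gen N x * gen N y * (gen N z * gen N w)) := by
        rw [smul_smul]; congr 1
        · ring
        · rw [mul_assoc]

section Abstract
variable {R : Type*} [CommRing R] {A : Type*} [Ring A] [Algebra R A] {n : ℕ}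

/-- product of `E` along a list of indices -/
def Pl (E : Fin n → A) (l : List (Fin n)) : A := (l.map E).prod

theorem Pl_nil (E : Fin n → A) : Pl E [] = 1 := rfl

theorem Pl_cons (E : Fin n → A) (x : Fin n) (l : List (Fin n)) :
    Pl E (x :: l) = E x * Pl E l := by simp [Pl]

theorem mul_Pl (E : Fin n → A) (Q : R)
    (hsq : ∀ k, E k * E k = 0)
    (hcomm : ∀ i j : Fin n, i < j → E j * E i = Q • (E i * E j))
    (l : List (Fin n)) (hs : l.Pairwise (· < ·)) (k : Fin n) :
    E k * Pl E l = if k ∈ l then 0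
      else (Q ^ (l.countP (fun x => decide (x < k)))) • Pl E (l.orderedInsert (· ≤ ·) k) := by
  induction l with
  | nil => simp [Pl_nil, Pl_cons, List.orderedInsert]
  | cons x l ih =>
    have hs' : l.Pairwise (· < ·) := hs.of_cons
    have hx : ∀ b ∈ l, x < b := fun b hb => List.rel_of_pairwise_cons hs hb
    rcases lt_trichotomy k x with hkx | rfl | hxk
    · have hmem : k ∉ x :: l := by
        simp only [List.mem_cons]
        rintro (rfl | hk)
        · exact lt_irrefl _ hkx
        · exact absurd (hx k hk) (by exact fun h => lt_asymm hkx h)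
      rw [if_neg hmem]
      have hcount : (x :: l).countP (fun y => decide (y < k)) = 0 := by
        rw [List.countP_eq_zero]
        intro b hb
        rcases List.mem_cons.1 hb with rfl | hb
        · simpa using not_lt.2 hkx.le
        · simpa using not_lt.2 (hkx.trans (hx b hb)).le
      have hins : (x :: l).orderedInsert (· ≤ ·) k = k :: x :: l := by
        simp [List.orderedInsert, hkx.le]
      rw [hins, hcount, pow_zero, one_smul]; simp [Pl_cons]
    · rw [if_pos List.mem_cons_self, Pl_cons, ← mul_assoc, hsq, zero_mul]
    · have hkx' : k ≠ x := ne_of_gt hxk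
      rw [Pl_cons, ← mul_assoc, hcomm x k hxk, smul_mul_assoc, mul_assoc, ih hs']
      by_cases hk : k ∈ l
      · rw [if_pos hk, if_pos (List.mem_cons_of_mem _ hk), mul_zero, smul_zero]
      · have hmem : k ∉ x :: l := by
          simp only [List.mem_cons]; rintro (rfl | h); exact hkx' rfl; exact hk h
        rw [if_neg hk, if_neg hmem]
        have hins : (x :: l).orderedInsert (· ≤ ·) k = x :: l.orderedInsert (· ≤ ·) k := by
          simp [List.orderedInsert, not_le.2 hxk]
        have hcount : (x :: l).countP (fun y => decide (y < k)) =
            l.countP (fun y => decide (y < k)) + 1 := by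
          rw [List.countP_cons]; simp [hxk]
        rw [hins, hcount, Pl_cons, mul_smul_comm, smul_smul, pow_succ]
        congr 1
        ring

/-- product of `E` over a finset, in increasing order -/
def Ps (E : Fin n → A) (s : Finset (Fin n)) : A := Pl E (s.sort (· ≤ ·))

theorem sort_insert' (k : Fin n) (s : Finset (Fin n)) (hk : k ∉ s) :
    (insert k s).sort (· ≤ ·) = (s.sort (· ≤ ·)).orderedInsert (· ≤ ·) k := by
  apply List.Perm.eq_of_pairwise' (Finset.pairwise_sort _ _)
    ((Finset.pairwise_sort s (· ≤ ·)).orderedInsert k _)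
  refine ((Finset.sort_perm_toList _ _).trans ?_).trans
    (List.perm_orderedInsert _ k _).symm
  refine (Finset.toList_insert hk).trans ?_
  exact List.Perm.cons k (Finset.sort_perm_toList s _).symm

theorem countP_sort (s : Finset (Fin n)) (k : Fin n) :
    (s.sort (· ≤ ·)).countP (fun x => decide (x < k)) = (s.filter (· < k)).card := by
  have h1 : ((s.sort (· ≤ ·) : List (Fin n)) : Multiset (Fin n)) = s.1 := Finset.sort_eq s _
  have h2 := Multiset.coe_countP (p := fun x => x < k) (s.sort (· ≤ ·))
  rw [h1] at h2
  rw [← h2, Finset.card_filter]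
  simp [Multiset.countP_eq_card_filter, Finset.filter, Finset.card]

theorem mul_Ps (E : Fin n → A) (Q : R)
    (hsq : ∀ k, E k * E k = 0)
    (hcomm : ∀ i j : Fin n, i < j → E j * E i = Q • (E i * E j))
    (s : Finset (Fin n)) (k : Fin n) :
    E k * Ps E s = if k ∈ s then 0
      else (Q ^ (s.filter (· < k)).card) • Ps E (insert k s) := by
  rw [Ps, mul_Pl E Q hsq hcomm _ (Finset.sortedLT_sort s).pairwise k]
  by_cases hk : k ∈ s
  · rw [if_pos (Finset.mem_sort (· ≤ ·) |>.2 hk), if_pos hk]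
  · rw [if_neg (fun h => hk ((Finset.mem_sort (· ≤ ·)).1 h)), if_neg hk,
      countP_sort, Ps, sort_insert' k s hk]

theorem rank_sum_aux (Q : R) (c : ℕ) : ∀ t : Finset (Fin n), t.card = c →
    ∑ k ∈ t, Q ^ (t.filter (· < k)).card = ∑ p ∈ Finset.range c, Q ^ p := by
  induction c with
  | zero =>
    intro t hc
    rw [Finset.card_eq_zero] at hc
    subst hc; simp
  | succ c ih =>
    intro t hc
    have hne : t.Nonempty := by rw [← Finset.card_pos, hc]; omega
    set m := t.max' hne with hm'
    have hm : m ∈ t := t.max'_mem hne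
    have h1 : t.filter (· < m) = t.erase m := by
      ext x
      simp only [Finset.mem_filter, Finset.mem_erase]
      constructor
      · rintro ⟨hx, hlt⟩; exact ⟨ne_of_lt hlt, hx⟩
      · rintro ⟨hne', hx⟩; exact ⟨hx, lt_of_le_of_ne (t.le_max' x hx) hne'⟩
    have h2 : ∀ x ∈ t.erase m, t.filter (· < x) = (t.erase m).filter (· < x) := by
      intro x hx
      ext y
      simp only [Finset.mem_filter, Finset.mem_erase]
      constructor
      · rintro ⟨hy, hlt⟩
        refine ⟨⟨?_, hy⟩, hlt⟩
        rintro rfl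
        exact absurd (t.le_max' x (Finset.mem_of_mem_erase hx)) (not_le.2 hlt)
      · rintro ⟨⟨_, hy⟩, hlt⟩; exact ⟨hy, hlt⟩
    have hcard : (t.erase m).card = c := by
      rw [Finset.card_erase_of_mem hm, hc]; omega
    rw [← Finset.add_sum_erase _ _ hm, h1, hcard,
      Finset.sum_congr rfl (fun x hx => by rw [h2 x hx]), ih _ hcard,
      Finset.sum_range_succ, add_comm]

theorem rank_sum (Q : R) (t : Finset (Fin n)) :
    ∑ k ∈ t, Q ^ (t.filter (· < k)).card = ∑ p ∈ Finset.range t.card, Q ^ p :=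
  rank_sum_aux Q t.card t rfl


theorem sum_insert_erase {β : Type*} [AddCommMonoid β] (r : ℕ)
    (F : Fin n → Finset (Fin n) → β) :
    ∑ s ∈ Finset.powersetCard r (Finset.univ : Finset (Fin n)), ∑ k ∈ sᶜ, F k s =
      ∑ t ∈ Finset.powersetCard (r + 1) (Finset.univ : Finset (Fin n)), ∑ k ∈ t, F k (t.erase k) := by
  rw [Finset.sum_sigma', Finset.sum_sigma']
  refine Finset.sum_bij' (fun p _ => (⟨insert p.2 p.1, p.2⟩ : Σ _ : Finset (Fin n), Fin n))
    (fun p _ => (⟨p.1.erase p.2, p.2⟩ : Σ _ : Finset (Fin n), Fin n)) ?_ ?_ ?_ ?_ ?_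
  · rintro ⟨s, k⟩ hp
    simp only [Finset.mem_sigma, Finset.mem_powersetCard, Finset.mem_compl] at hp ⊢
    obtain ⟨⟨_, hcard⟩, hk⟩ := hp
    refine ⟨⟨Finset.subset_univ _, ?_⟩, Finset.mem_insert_self _ _⟩
    rw [Finset.card_insert_of_notMem hk, hcard]
  · rintro ⟨t, k⟩ hp
    simp only [Finset.mem_sigma, Finset.mem_powersetCard, Finset.mem_compl] at hp ⊢
    obtain ⟨⟨_, hcard⟩, hk⟩ := hp
    refine ⟨⟨Finset.subset_univ _, ?_⟩, Finset.notMem_erase _ _⟩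
    rw [Finset.card_erase_of_mem hk, hcard]; omega
  · rintro ⟨s, k⟩ hp
    simp only [Finset.mem_sigma, Finset.mem_powersetCard, Finset.mem_compl] at hp
    simp [Finset.erase_insert hp.2]
  · rintro ⟨t, k⟩ hp
    simp only [Finset.mem_sigma, Finset.mem_powersetCard, Finset.mem_compl] at hp
    simp [Finset.insert_erase hp.2]
  · rintro ⟨s, k⟩ hp
    simp only [Finset.mem_sigma, Finset.mem_powersetCard, Finset.mem_compl] at hp
    simp [Finset.erase_insert hp.2]

theorem w_mul_T (E : Fin n → A) (Q : R)
    (hsq : ∀ k, E k * E k = 0)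
    (hcomm : ∀ i j : Fin n, i < j → E j * E i = Q • (E i * E j))
    (a : Fin n → R) (r : ℕ) :
    (∑ k, a k • E k) *
        (∑ s ∈ Finset.powersetCard r (Finset.univ : Finset (Fin n)),
          (∏ k ∈ s, a k) • Ps E s) =
      (∑ p ∈ Finset.range (r + 1), Q ^ p) •
        ∑ t ∈ Finset.powersetCard (r + 1) (Finset.univ : Finset (Fin n)),
          (∏ k ∈ t, a k) • Ps E t := by
  rw [Finset.sum_mul_sum, Finset.sum_comm]
  have step : ∀ s ∈ Finset.powersetCard r (Finset.univ : Finset (Fin n)), ∀ k : Fin n,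
      (a k • E k) * ((∏ x ∈ s, a x) • Ps E s) =
        if k ∈ sᶜ then
          (a k * ∏ x ∈ s, a x) • ((Q ^ (s.filter (· < k)).card) • Ps E (insert k s))
        else 0 := by
    intro s _ k
    rw [smul_mul_smul_comm, mul_Ps E Q hsq hcomm s k]
    by_cases hk : k ∈ s
    · rw [if_pos hk, if_neg (by simpa using hk), smul_zero]
    · rw [if_neg hk, if_pos (by simpa using hk)]
  rw [Finset.sum_congr rfl (fun s hs => Finset.sum_congr rfl (fun k _ => step s hs k))]
  rw [Finset.sum_congr rfl (fun s _ => by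
    rw [Finset.sum_ite_mem, Finset.univ_inter])]
  rw [sum_insert_erase r (fun k s =>
    (a k * ∏ x ∈ s, a x) • ((Q ^ (s.filter (· < k)).card) • Ps E (insert k s)))]
  rw [Finset.smul_sum]
  refine Finset.sum_congr rfl (fun t ht => ?_)
  simp only [Finset.mem_powersetCard] at ht
  have htc : t.card = r + 1 := ht.2
  have hstep2 : ∀ k ∈ t,
      (a k * ∏ x ∈ t.erase k, a x) •
          ((Q ^ ((t.erase k).filter (· < k)).card) • Ps E (insert k (t.erase k))) =
        (Q ^ (t.filter (· < k)).card) • ((∏ x ∈ t, a x) • Ps E t) := by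
    intro k hk
    rw [Finset.insert_erase hk, Finset.mul_prod_erase t a hk]
    have hfilter : (t.erase k).filter (· < k) = t.filter (· < k) := by
      ext y
      simp only [Finset.mem_filter, Finset.mem_erase]
      constructor
      · rintro ⟨⟨_, hy⟩, h⟩; exact ⟨hy, h⟩
      · rintro ⟨hy, h⟩; exact ⟨⟨ne_of_lt h, hy⟩, h⟩
    rw [hfilter, smul_comm]
  rw [Finset.sum_congr rfl hstep2, ← Finset.sum_smul, ← htc, rank_sum]

theorem w_pow (E : Fin n → A) (Q : R)
    (hsq : ∀ k, E k * E k = 0)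
    (hcomm : ∀ i j : Fin n, i < j → E j * E i = Q • (E i * E j))
    (a : Fin n → R) (r : ℕ) :
    (∑ k, a k • E k) ^ r =
      (∏ i ∈ Finset.range r, ∑ p ∈ Finset.range (i + 1), Q ^ p) •
        ∑ s ∈ Finset.powersetCard r (Finset.univ : Finset (Fin n)),
          (∏ k ∈ s, a k) • Ps E s := by
  induction r with
  | zero => simp [Ps, Pl]
  | succ r ih =>
    rw [pow_succ', ih, mul_smul_comm, w_mul_T E Q hsq hcomm a r, smul_smul,
      Finset.prod_range_succ]


theorem sort_image (r : ℕ) (f : Fin r → Fin n) (hf : StrictMono f) :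
    ((Finset.image f Finset.univ).sort (· ≤ ·)) = List.ofFn f := by
  have hcard : (Finset.image f Finset.univ).card = r := by
    rw [Finset.card_image_of_injective _ hf.injective, Finset.card_univ, Fintype.card_fin]
  have huniq : f = (Finset.image f Finset.univ).orderEmbOfFin hcard :=
    Finset.orderEmbOfFin_unique hcard (fun x => Finset.mem_image_of_mem f (Finset.mem_univ x)) hf
  apply List.ext_getElem
  · rw [Finset.length_sort, hcard, List.length_ofFn]
  · intro i h1 h2
    rw [List.getElem_ofFn]
    have hj : ∀ j : Fin r, f j =
        ((Finset.image f Finset.univ).sort (· ≤ ·))[j.1]'(by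
          rw [Finset.length_sort, hcard]; exact j.2) := by
      intro j
      conv_lhs => rw [huniq]
      rw [Finset.orderEmbOfFin_apply]
      simp [Fin.getElem_fin]
    exact (hj ⟨i, by simpa using h2⟩).symm

theorem sum_strictMono_eq (E : Fin n → A) (a : Fin n → R) (r : ℕ) :
    (∑ f : Fin r → Fin n,
        if StrictMono f then (∏ i : Fin r, a (f i)) • Pl E (List.ofFn f) else 0) =
      ∑ s ∈ Finset.powersetCard r (Finset.univ : Finset (Fin n)),
        (∏ k ∈ s, a k) • Ps E s := by
  rw [← Finset.sum_filter]
  refine Finset.sum_bij' (fun f _ => Finset.image f Finset.univ)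
    (fun s hs => fun i => s.orderEmbOfFin (by simpa using (Finset.mem_powersetCard.1 hs).2) i)
    ?_ ?_ ?_ ?_ ?_
  · intro f hf
    have hmono : StrictMono f := (Finset.mem_filter.1 hf).2
    simp only [Finset.mem_powersetCard]
    exact ⟨Finset.subset_univ _, by
      rw [Finset.card_image_of_injective _ hmono.injective, Finset.card_univ, Fintype.card_fin]⟩
  · intro s hs
    exact Finset.mem_filter.2 ⟨Finset.mem_univ _, (s.orderEmbOfFin _).strictMono⟩
  · intro f hf
    have hmono : StrictMono f := (Finset.mem_filter.1 hf).2
    have hcard : (Finset.image f Finset.univ).card = r := by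
      rw [Finset.card_image_of_injective _ hmono.injective, Finset.card_univ, Fintype.card_fin]
    exact funext fun i =>
      (congrFun (Finset.orderEmbOfFin_unique hcard
        (fun x => Finset.mem_image_of_mem f (Finset.mem_univ x)) hmono) i).symm
  · intro s hs
    have hcard : s.card = r := by simpa using (Finset.mem_powersetCard.1 hs).2
    apply Finset.eq_of_subset_of_card_le
    · intro x hx
      obtain ⟨i, _, rfl⟩ := Finset.mem_image.1 hx
      exact s.orderEmbOfFin_mem _ i
    · rw [Finset.card_image_of_injective _ (s.orderEmbOfFin _).strictMono.injective,
        Finset.card_univ, Fintype.card_fin, hcard]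
  · intro f hf
    have hmono : StrictMono f := (Finset.mem_filter.1 hf).2
    rw [Finset.prod_image (fun x _ y _ h => hmono.injective h), Ps, sort_image r f hmono]

end Abstract


noncomputable def Epair (n : ℕ) (k : Fin n) : qExt (2 * n) :=
  gen (2 * n) ⟨2 * k.1, lt_of_lt_of_le (Nat.lt_succ_self _) (by have := k.2; omega)⟩ *
    gen (2 * n) ⟨2 * k.1 + 1, lt_of_lt_of_le (Nat.lt_succ_self _) (by have := k.2; omega)⟩

theorem Epair_sq (n : ℕ) (k : Fin n) : Epair n k * Epair n k = 0 := by
  unfold Epair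
  exact pair_sq (by simp [Fin.mk_lt_mk])

theorem Epair_comm (n : ℕ) {i j : Fin n} (h : i < j) :
    Epair n j * Epair n i = (q1 ^ 4) • (Epair n i * Epair n j) := by
  have hij : i.1 < j.1 := h
  unfold Epair
  exact pair_comm (by simp only [Fin.mk_lt_mk]; omega) (by simp only [Fin.mk_lt_mk]; omega)
    (by simp only [Fin.mk_lt_mk]; omega) (by simp only [Fin.mk_lt_mk]; omega)

theorem q1_pow_ne_one : (q1 : K1) ^ 4 ≠ 1 := by
  intro h
  have h2 : (Polynomial.X : Polynomial ℚ) ^ 4 = 1 := by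
    apply RatFunc.algebraMap_injective ℚ
    rw [map_pow, map_one, RatFunc.algebraMap_X]
    exact h
  have h3 := congrArg Polynomial.natDegree h2
  simp [Polynomial.natDegree_X_pow] at h3

theorem scalar_eq (r : ℕ) :
    (∏ i ∈ Finset.range r, (1 - q1 ^ 4 * (q1 ^ 4) ^ i)) / (1 - q1 ^ 4) ^ r =
      ∏ i ∈ Finset.range r, ∑ p ∈ Finset.range (i + 1), (q1 ^ 4) ^ p := by
  have hQ : (q1 ^ 4 : K1) ≠ 1 := q1_pow_ne_one
  have hden : ((1 : K1) - q1 ^ 4) ^ r = ∏ _i ∈ Finset.range r, (1 - q1 ^ 4) := by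
    rw [Finset.prod_const, Finset.card_range]
  rw [hden, ← Finset.prod_div_distrib]
  refine Finset.prod_congr rfl fun i _ => ?_
  rw [geom_sum_eq hQ (i + 1), ← neg_div_neg_eq, neg_sub, neg_sub, pow_succ' (q1 ^ 4) i]


/-- in `Λ_q(K^{2n})` the element `w₁ = Σ_k a_k v_{2k-1} ∧ v_{2k}` satisfies
`w₁^r = [r]_{q⁴}! Σ_{k₁<⋯<k_r} a_{k₁}⋯a_{k_r} v_{2k₁-1}∧v_{2k₁}∧⋯∧v_{2k_r-1}∧v_{2k_r}`
where `[r]_{q⁴}! = (q⁴;q⁴)_r/(1-q⁴)^r`. -/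
theorem stmt_5 (n r : ℕ) (a : Fin n → K1) :
    (∑ k : Fin n, a k •
        (gen (2 * n) ⟨2 * k.1, by have := k.2; omega⟩ *
          gen (2 * n) ⟨2 * k.1 + 1, by have := k.2; omega⟩)) ^ r =
      ((∏ i ∈ Finset.range r, (1 - q1 ^ 4 * (q1 ^ 4) ^ i)) / (1 - q1 ^ 4) ^ r) •
        ∑ f : Fin r → Fin n,
          if StrictMono f then (
            (∏ i : Fin r, a (f i)) •
              (List.ofFn fun i : Fin r =>
                gen (2 * n) ⟨2 * (f i).1, by have := (f i).2; omega⟩ *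
                  gen (2 * n) ⟨2 * (f i).1 + 1, by have := (f i).2; omega⟩).prod)
          else (0 : qExt (2 * n)) := by
  have hsq : ∀ k : Fin n, Epair n k * Epair n k = 0 := Epair_sq n
  have hcomm : ∀ i j : Fin n, i < j →
      Epair n j * Epair n i = (q1 ^ 4) • (Epair n i * Epair n j) :=
    fun i j h => Epair_comm n h
  have key := w_pow (Epair n) (q1 ^ 4) hsq hcomm a r
  have hbody : ∀ f : Fin r → Fin n, Pl (Epair n) (List.ofFn f) =
      (List.ofFn fun i : Fin r => Epair n (f i)).prod := by
    intro f
    rw [Pl, List.map_ofFn]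
    rfl
  have goalrw : (∑ f : Fin r → Fin n, if StrictMono f then
        (∏ i : Fin r, a (f i)) • (List.ofFn fun i : Fin r => Epair n (f i)).prod
      else 0) =
      ∑ s ∈ Finset.powersetCard r (Finset.univ : Finset (Fin n)),
        (∏ k ∈ s, a k) • Ps (Epair n) s := by
    rw [← sum_strictMono_eq (Epair n) a r]
    refine Finset.sum_congr rfl fun f _ => ?_
    by_cases hf : StrictMono f
    · rw [if_pos hf, if_pos hf, hbody f]
    · rw [if_neg hf, if_neg hf]
  show (∑ k : Fin n, a k • Epair n k) ^ r =
      ((∏ i ∈ Finset.range r, (1 - q1 ^ 4 * (q1 ^ 4) ^ i)) / (1 - q1 ^ 4) ^ r) •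
        ∑ f : Fin r → Fin n, if StrictMono f then
          (∏ i : Fin r, a (f i)) • (List.ofFn fun i : Fin r => Epair n (f i)).prod
        else 0
  rw [key, scalar_eq r, goalrw]


end
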